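/- Let R > 0 and let m : ℕ × ℕ × ℝ → ℝ be such that each t ↦ m_{h,k}(t) is differentiable with ṁ_{h,k}(t) = −m_{h+1,k}(t) − m_{h,k+1}(t) + m_{h,k}(t)·(m_{1,0}(t) + m_{0,1}(t)) for all h, k ≥ 0 and t, and |m_{h,k}(t)| ≤ R^{h+k} for all h, k, t, with |m_{1,0}(t)| + |m_{0,1}(t)| ≤ 2R. Let z₁, z₂ ∈ ℂ with |z₁| > R and |z₂| > R, and define S(t) = Σ_{(h,k)∈ℕ×ℕ} m_{h,k}(t)/(z₁^{h+1} z₂^{k+1}), S₁(t) = Σ_{h∈ℕ} m_{h,0}(t)/z₁^{h+1}, S₂(t) = Σ_{k∈ℕ} m_{0,k}(t)/z₂^{k+1}. Then all three series are absolutely summable for every t, S is differentiable, and Ṡ(t) = (m_{1,0}(t) + m_{0,1}(t) − z₁ − z₂)·S(t) + S₁(t) + S₂(t) for every t. -/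

import Mathlib

open Complex

private lemma aux_bound (R : ℝ) (hR : 0 < R) (z₁ z₂ : ℂ)
    (hz₁ : R < ‖z₁‖) (hz₂ : R < ‖z₂‖) (C : ℝ) (x : ℂ) (h k : ℕ)
    (hx : ‖x‖ ≤ C * R ^ (h + k)) :
    ‖x / (z₁ ^ (h + 1) * z₂ ^ (k + 1))‖ ≤
      C / (‖z₁‖ * ‖z₂‖) *
        ((R / ‖z₁‖) ^ h * (R / ‖z₂‖) ^ k) := by
  have hA : (0:ℝ) < ‖z₁‖ := hR.trans hz₁
  have hB : (0:ℝ) < ‖z₂‖ := hR.trans hz₂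
  have key : C / (‖z₁‖ * ‖z₂‖) *
      ((R / ‖z₁‖) ^ h * (R / ‖z₂‖) ^ k)
      = C * R ^ (h + k) / (‖z₁‖ ^ (h + 1) * ‖z₂‖ ^ (k + 1)) := by
    rw [div_pow, div_pow, pow_add, pow_succ, pow_succ, div_mul_div_comm, div_mul_div_comm]
    ring
  rw [norm_div, norm_mul, norm_pow, norm_pow, key]
  refine div_le_div₀ (le_trans (norm_nonneg x) hx) hx (by positivity) le_rfl

private lemma aux_geom (R : ℝ) (hR : 0 < R) (z₁ z₂ : ℂ)
    (hz₁ : R < ‖z₁‖) (hz₂ : R < ‖z₂‖) :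
    Summable fun hk : ℕ × ℕ =>
      (R / ‖z₁‖) ^ hk.1 * (R / ‖z₂‖) ^ hk.2 := by
  have hA : (0:ℝ) < ‖z₁‖ := hR.trans hz₁
  have hB : (0:ℝ) < ‖z₂‖ := hR.trans hz₂
  have h1 : Summable fun n : ℕ => (R / ‖z₁‖) ^ n :=
    summable_geometric_of_lt_one (by positivity) ((div_lt_one hA).2 hz₁)
  have h2 : Summable fun n : ℕ => (R / ‖z₂‖) ^ n :=
    summable_geometric_of_lt_one (by positivity) ((div_lt_one hB).2 hz₂)
  exact h1.mul_of_nonneg h2 (fun n => by positivity) (fun n => by positivity)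

private lemma aux_summable (R : ℝ) (hR : 0 < R) (z₁ z₂ : ℂ)
    (hz₁ : R < ‖z₁‖) (hz₂ : R < ‖z₂‖) (C : ℝ) (f : ℕ × ℕ → ℂ)
    (hf : ∀ hk : ℕ × ℕ, ‖f hk‖ ≤ C * R ^ (hk.1 + hk.2)) :
    Summable fun hk : ℕ × ℕ => ‖f hk / (z₁ ^ (hk.1 + 1) * z₂ ^ (hk.2 + 1))‖ := by
  refine Summable.of_nonneg_of_le (fun _ => norm_nonneg _) ?_
    ((aux_geom R hR z₁ z₂ hz₁ hz₂).mul_left (C / (‖z₁‖ * ‖z₂‖)))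
  intro hk
  exact aux_bound R hR z₁ z₂ hz₁ hz₂ C (f hk) hk.1 hk.2 (hf hk)

private lemma aux_shift (z₁ z₂ : ℂ) (hz₁ : z₁ ≠ 0) (M : ℕ → ℕ → ℂ)
    (hsum : Summable fun hk : ℕ × ℕ => ‖M hk.1 hk.2 / (z₁ ^ (hk.1 + 1) * z₂ ^ (hk.2 + 1))‖)
    (hsum1 : Summable fun hk : ℕ × ℕ =>
      ‖M (hk.1 + 1) hk.2 / (z₁ ^ (hk.1 + 1) * z₂ ^ (hk.2 + 1))‖) :
    ∑' hk : ℕ × ℕ, M (hk.1 + 1) hk.2 / (z₁ ^ (hk.1 + 1) * z₂ ^ (hk.2 + 1))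
      = z₁ * (∑' hk : ℕ × ℕ, M hk.1 hk.2 / (z₁ ^ (hk.1 + 1) * z₂ ^ (hk.2 + 1)))
        - ∑' k : ℕ, M 0 k / z₂ ^ (k + 1) := by
  have gS := hsum.of_norm
  have gT := hsum1.of_norm
  have h0 : 0 ≤ fun hk : ℕ × ℕ => ‖M hk.1 hk.2 / (z₁ ^ (hk.1 + 1) * z₂ ^ (hk.2 + 1))‖ :=
    fun _ => norm_nonneg _
  have hpair := (summable_prod_of_nonneg h0).1 hsum
  have hrow : Summable fun h : ℕ => ∑' k : ℕ, M h k / (z₁ ^ (h + 1) * z₂ ^ (k + 1)) := by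
    refine Summable.of_norm_bounded hpair.2 fun h => ?_
    exact norm_tsum_le_tsum_norm (hpair.1 h)
  have eS : (∑' hk : ℕ × ℕ, M hk.1 hk.2 / (z₁ ^ (hk.1 + 1) * z₂ ^ (hk.2 + 1)))
      = (∑' k : ℕ, M 0 k / (z₁ ^ 1 * z₂ ^ (k + 1)))
        + ∑' h : ℕ, ∑' k : ℕ, M (h + 1) k / (z₁ ^ (h + 1 + 1) * z₂ ^ (k + 1)) := by
    rw [gS.tsum_prod' gS.prod_factor, hrow.tsum_eq_zero_add]
  have hterm : ∀ h k : ℕ, M (h + 1) k / (z₁ ^ (h + 1) * z₂ ^ (k + 1))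
      = z₁ * (M (h + 1) k / (z₁ ^ (h + 1 + 1) * z₂ ^ (k + 1))) := by
    intro h k
    rw [pow_succ z₁ (h + 1)]
    rcases eq_or_ne z₂ 0 with h' | h'
    · simp [h']
    · field_simp
  have eE : (∑' k : ℕ, M 0 k / (z₁ ^ 1 * z₂ ^ (k + 1)))
      = (∑' k : ℕ, M 0 k / z₂ ^ (k + 1)) / z₁ := by
    rw [← tsum_div_const]
    exact tsum_congr fun k => by rw [pow_one, div_div, mul_comm]
  calc ∑' hk : ℕ × ℕ, M (hk.1 + 1) hk.2 / (z₁ ^ (hk.1 + 1) * z₂ ^ (hk.2 + 1))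
      = ∑' h : ℕ, ∑' k : ℕ, M (h + 1) k / (z₁ ^ (h + 1) * z₂ ^ (k + 1)) :=
        gT.tsum_prod' gT.prod_factor
    _ = z₁ * ∑' h : ℕ, ∑' k : ℕ, M (h + 1) k / (z₁ ^ (h + 1 + 1) * z₂ ^ (k + 1)) := by
        simp_rw [hterm, tsum_mul_left]
    _ = z₁ * ((∑' hk : ℕ × ℕ, M hk.1 hk.2 / (z₁ ^ (hk.1 + 1) * z₂ ^ (hk.2 + 1)))
          - ∑' k : ℕ, M 0 k / (z₁ ^ 1 * z₂ ^ (k + 1))) := by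
        rw [eS]; ring
    _ = z₁ * (∑' hk : ℕ × ℕ, M hk.1 hk.2 / (z₁ ^ (hk.1 + 1) * z₂ ^ (hk.2 + 1)))
          - ∑' k : ℕ, M 0 k / z₂ ^ (k + 1) := by
        rw [eE, mul_sub]
        congr 1
        field_simp

/-- If moments `m_{h,k}(t)` satisfy the Toda moment equations and geometric bounds, then the
double Stieltjes series `S(t) = Σ m_{h,k}(t)/(z₁^{h+1} z₂^{k+1})` and the marginal series
converge absolutely, and `Ṡ(t) = (m_{1,0}(t) + m_{0,1}(t) − z₁ − z₂) S(t) + S₁(t) + S₂(t)`. -/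
theorem stieltjes_series_ode (R : ℝ) (hR : 0 < R) (m : ℕ → ℕ → ℝ → ℝ)
    (hder : ∀ (h k : ℕ) (t : ℝ),
      HasDerivAt (fun s => m h k s)
        (-(m (h + 1) k t) - m h (k + 1) t + m h k t * (m 1 0 t + m 0 1 t)) t)
    (hbd : ∀ (h k : ℕ) (t : ℝ), |m h k t| ≤ R ^ (h + k))
    (hbd1 : ∀ t : ℝ, |m 1 0 t| + |m 0 1 t| ≤ 2 * R)
    (z₁ z₂ : ℂ) (hz₁ : R < ‖z₁‖) (hz₂ : R < ‖z₂‖) :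
    (∀ t : ℝ, Summable fun hk : ℕ × ℕ =>
      ‖((m hk.1 hk.2 t : ℝ) : ℂ) / (z₁ ^ (hk.1 + 1) * z₂ ^ (hk.2 + 1))‖) ∧
    (∀ t : ℝ, Summable fun h : ℕ => ‖((m h 0 t : ℝ) : ℂ) / z₁ ^ (h + 1)‖) ∧
    (∀ t : ℝ, Summable fun k : ℕ => ‖((m 0 k t : ℝ) : ℂ) / z₂ ^ (k + 1)‖) ∧
    (∀ t : ℝ,
      HasDerivAt
        (fun s => ∑' hk : ℕ × ℕ,
          ((m hk.1 hk.2 s : ℝ) : ℂ) / (z₁ ^ (hk.1 + 1) * z₂ ^ (hk.2 + 1)))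
        ((((m 1 0 t + m 0 1 t : ℝ) : ℂ) - z₁ - z₂)
            * (∑' hk : ℕ × ℕ,
                ((m hk.1 hk.2 t : ℝ) : ℂ) / (z₁ ^ (hk.1 + 1) * z₂ ^ (hk.2 + 1)))
          + (∑' h : ℕ, ((m h 0 t : ℝ) : ℂ) / z₁ ^ (h + 1))
          + (∑' k : ℕ, ((m 0 k t : ℝ) : ℂ) / z₂ ^ (k + 1))) t) := by
  have hA : (0:ℝ) < ‖z₁‖ := hR.trans hz₁
  have hB : (0:ℝ) < ‖z₂‖ := hR.trans hz₂
  have hz₁0 : z₁ ≠ 0 := by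
    intro h; rw [h] at hz₁; simp at hz₁; linarith
  have hz₂0 : z₂ ≠ 0 := by
    intro h; rw [h] at hz₂; simp at hz₂; linarith
  have hnorm : ∀ (h k : ℕ) (t : ℝ), ‖((m h k t : ℝ) : ℂ)‖ ≤ 1 * R ^ (h + k) := by
    intro h k t
    rw [one_mul, Complex.norm_real, Real.norm_eq_abs]
    exact hbd h k t
  have e1 : ∀ (h k : ℕ) (y : ℝ), |m (h + 1) k y| ≤ R * R ^ (h + k) := by
    intro h k y
    calc |m (h + 1) k y| ≤ R ^ (h + 1 + k) := hbd (h + 1) k y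
      _ = R * R ^ (h + k) := by rw [show h + 1 + k = (h + k) + 1 from by omega, pow_succ]; ring
  have e2 : ∀ (h k : ℕ) (y : ℝ), |m h (k + 1) y| ≤ R * R ^ (h + k) := by
    intro h k y
    calc |m h (k + 1) y| ≤ R ^ (h + (k + 1)) := hbd h (k + 1) y
      _ = R * R ^ (h + k) := by rw [show h + (k + 1) = (h + k) + 1 from by omega, pow_succ]; ring
  have S0 : ∀ t : ℝ, Summable fun hk : ℕ × ℕ =>
      ‖((m hk.1 hk.2 t : ℝ) : ℂ) / (z₁ ^ (hk.1 + 1) * z₂ ^ (hk.2 + 1))‖ :=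
    fun t => aux_summable R hR z₁ z₂ hz₁ hz₂ 1 _ (fun hk => hnorm hk.1 hk.2 t)
  have S1all : ∀ t : ℝ, Summable fun h : ℕ => ‖((m h 0 t : ℝ) : ℂ) / z₁ ^ (h + 1)‖ := by
    intro t
    refine Summable.of_nonneg_of_le (fun _ => norm_nonneg _) ?_
      ((summable_geometric_of_lt_one (by positivity) ((div_lt_one hA).2 hz₁)).mul_left
        (1 / ‖z₁‖))
    intro h
    rw [norm_div, norm_pow, Complex.norm_real, Real.norm_eq_abs]
    have e : 1 / ‖z₁‖ * (R / ‖z₁‖) ^ h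
        = R ^ h / ‖z₁‖ ^ (h + 1) := by
      rw [div_pow, mul_comm, mul_one_div, div_div, ← pow_succ]
    rw [e]
    exact div_le_div₀ (by positivity) (by simpa using hbd h 0 t) (by positivity) le_rfl
  have S2all : ∀ t : ℝ, Summable fun k : ℕ => ‖((m 0 k t : ℝ) : ℂ) / z₂ ^ (k + 1)‖ := by
    intro t
    refine Summable.of_nonneg_of_le (fun _ => norm_nonneg _) ?_
      ((summable_geometric_of_lt_one (by positivity) ((div_lt_one hB).2 hz₂)).mul_left
        (1 / ‖z₂‖))
    intro k
    rw [norm_div, norm_pow, Complex.norm_real, Real.norm_eq_abs]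
    have e : 1 / ‖z₂‖ * (R / ‖z₂‖) ^ k
        = R ^ k / ‖z₂‖ ^ (k + 1) := by
      rw [div_pow, mul_comm, mul_one_div, div_div, ← pow_succ]
    rw [e]
    exact div_le_div₀ (by positivity) (by simpa using hbd 0 k t) (by positivity) le_rfl
  refine ⟨S0, S1all, S2all, ?_⟩
  intro t
  -- termwise derivatives
  have hderC : ∀ (n : ℕ × ℕ) (y : ℝ),
      HasDerivAt (fun s => ((m n.1 n.2 s : ℝ) : ℂ) / (z₁ ^ (n.1 + 1) * z₂ ^ (n.2 + 1)))
        (((-(m (n.1 + 1) n.2 y) - m n.1 (n.2 + 1) y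
            + m n.1 n.2 y * (m 1 0 y + m 0 1 y) : ℝ) : ℂ)
          / (z₁ ^ (n.1 + 1) * z₂ ^ (n.2 + 1))) y :=
    fun n y => ((hder n.1 n.2 y).ofReal_comp).div_const _
  have hnum : ∀ (h k : ℕ) (y : ℝ),
      |(-(m (h + 1) k y) - m h (k + 1) y + m h k y * (m 1 0 y + m 0 1 y))|
        ≤ 4 * R * R ^ (h + k) := by
    intro h k y
    have h4 : |(-(m (h + 1) k y) - m h (k + 1) y)| ≤ |m (h + 1) k y| + |m h (k + 1) y| := by
      calc |(-(m (h + 1) k y) - m h (k + 1) y)|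
          ≤ |(-(m (h + 1) k y))| + |m h (k + 1) y| := abs_sub _ _
        _ = |m (h + 1) k y| + |m h (k + 1) y| := by rw [abs_neg]
    have e3 : |m h k y * (m 1 0 y + m 0 1 y)| ≤ R ^ (h + k) * (2 * R) := by
      rw [abs_mul]
      exact mul_le_mul (hbd h k y) (le_trans (abs_add_le _ _) (hbd1 y)) (abs_nonneg _)
        (by positivity)
    have habs : |(-(m (h + 1) k y) - m h (k + 1) y + m h k y * (m 1 0 y + m 0 1 y))|
        ≤ |(-(m (h + 1) k y) - m h (k + 1) y)| + |m h k y * (m 1 0 y + m 0 1 y)| :=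
      abs_add_le _ _
    have heq : 4 * R * R ^ (h + k)
        = R * R ^ (h + k) + R * R ^ (h + k) + R ^ (h + k) * (2 * R) := by ring
    have := e1 h k y
    have := e2 h k y
    linarith
  have hu : Summable fun n : ℕ × ℕ =>
      4 * R / (‖z₁‖ * ‖z₂‖) *
        ((R / ‖z₁‖) ^ n.1 * (R / ‖z₂‖) ^ n.2) :=
    (aux_geom R hR z₁ z₂ hz₁ hz₂).mul_left _
  have hg' : ∀ (n : ℕ × ℕ) (y : ℝ),
      ‖((-(m (n.1 + 1) n.2 y) - m n.1 (n.2 + 1) y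
          + m n.1 n.2 y * (m 1 0 y + m 0 1 y) : ℝ) : ℂ)
        / (z₁ ^ (n.1 + 1) * z₂ ^ (n.2 + 1))‖
        ≤ 4 * R / (‖z₁‖ * ‖z₂‖) *
            ((R / ‖z₁‖) ^ n.1 * (R / ‖z₂‖) ^ n.2) := by
    intro n y
    refine aux_bound R hR z₁ z₂ hz₁ hz₂ (4 * R) _ n.1 n.2 ?_
    rw [Complex.norm_real, Real.norm_eq_abs]
    exact hnum n.1 n.2 y
  have hd := hasDerivAt_tsum hu hderC hg' ((S0 t).of_norm) t
  -- now rewrite the derivative value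
  have sA1 : Summable fun n : ℕ × ℕ =>
      ((m (n.1 + 1) n.2 t : ℝ) : ℂ) / (z₁ ^ (n.1 + 1) * z₂ ^ (n.2 + 1)) :=
    (aux_summable R hR z₁ z₂ hz₁ hz₂ R _ (fun hk => by
      rw [Complex.norm_real, Real.norm_eq_abs]; exact e1 hk.1 hk.2 t)).of_norm
  have sA2 : Summable fun n : ℕ × ℕ =>
      ((m n.1 (n.2 + 1) t : ℝ) : ℂ) / (z₁ ^ (n.1 + 1) * z₂ ^ (n.2 + 1)) :=
    (aux_summable R hR z₁ z₂ hz₁ hz₂ R _ (fun hk => by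
      rw [Complex.norm_real, Real.norm_eq_abs]; exact e2 hk.1 hk.2 t)).of_norm
  have sG : Summable fun n : ℕ × ℕ =>
      ((m n.1 n.2 t : ℝ) : ℂ) / (z₁ ^ (n.1 + 1) * z₂ ^ (n.2 + 1)) := (S0 t).of_norm
  have T1eq := aux_shift z₁ z₂ hz₁0 (fun h k => ((m h k t : ℝ) : ℂ)) (S0 t)
    (aux_summable R hR z₁ z₂ hz₁ hz₂ R _ (fun hk => by
      rw [Complex.norm_real, Real.norm_eq_abs]; exact e1 hk.1 hk.2 t))
  have S0' := aux_summable R hR z₂ z₁ hz₂ hz₁ 1 (fun kh : ℕ × ℕ => ((m kh.2 kh.1 t : ℝ) : ℂ))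
    (fun kh => by
      rw [Complex.norm_real, Real.norm_eq_abs, one_mul, Nat.add_comm]
      exact hbd kh.2 kh.1 t)
  have sh2' := aux_summable R hR z₂ z₁ hz₂ hz₁ R
    (fun kh : ℕ × ℕ => ((m kh.2 (kh.1 + 1) t : ℝ) : ℂ))
    (fun kh => by
      rw [Complex.norm_real, Real.norm_eq_abs, Nat.add_comm kh.1 kh.2]
      exact e2 kh.2 kh.1 t)
  have T2eq' := aux_shift z₂ z₁ hz₂0 (fun k h => ((m h k t : ℝ) : ℂ)) S0' sh2'
  have hswap : ∀ f : ℕ × ℕ → ℂ, (∑' kh : ℕ × ℕ, f (kh.2, kh.1)) = ∑' hk : ℕ × ℕ, f hk :=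
    fun f => (Equiv.prodComm ℕ ℕ).tsum_eq f
  have eSw : (∑' kh : ℕ × ℕ, ((m kh.2 kh.1 t : ℝ) : ℂ) / (z₂ ^ (kh.1 + 1) * z₁ ^ (kh.2 + 1)))
      = ∑' hk : ℕ × ℕ, ((m hk.1 hk.2 t : ℝ) : ℂ) / (z₁ ^ (hk.1 + 1) * z₂ ^ (hk.2 + 1)) := by
    rw [← hswap (fun hk => ((m hk.1 hk.2 t : ℝ) : ℂ) / (z₁ ^ (hk.1 + 1) * z₂ ^ (hk.2 + 1)))]
    exact tsum_congr fun kh => by rw [mul_comm]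
  have eT2 : (∑' hk : ℕ × ℕ,
        ((m hk.1 (hk.2 + 1) t : ℝ) : ℂ) / (z₁ ^ (hk.1 + 1) * z₂ ^ (hk.2 + 1)))
      = ∑' kh : ℕ × ℕ, ((m kh.2 (kh.1 + 1) t : ℝ) : ℂ) / (z₂ ^ (kh.1 + 1) * z₁ ^ (kh.2 + 1)) := by
    rw [← hswap (fun kh => ((m kh.2 (kh.1 + 1) t : ℝ) : ℂ) / (z₂ ^ (kh.1 + 1) * z₁ ^ (kh.2 + 1)))]
    exact tsum_congr fun hk => by rw [mul_comm]
  have T2full : (∑' hk : ℕ × ℕ,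
        ((m hk.1 (hk.2 + 1) t : ℝ) : ℂ) / (z₁ ^ (hk.1 + 1) * z₂ ^ (hk.2 + 1)))
      = z₂ * (∑' hk : ℕ × ℕ, ((m hk.1 hk.2 t : ℝ) : ℂ) / (z₁ ^ (hk.1 + 1) * z₂ ^ (hk.2 + 1)))
        - ∑' h : ℕ, ((m h 0 t : ℝ) : ℂ) / z₁ ^ (h + 1) := by
    rw [eT2, T2eq', eSw]
  have hterm : ∀ n : ℕ × ℕ,
      ((-(m (n.1 + 1) n.2 t) - m n.1 (n.2 + 1) t
          + m n.1 n.2 t * (m 1 0 t + m 0 1 t) : ℝ) : ℂ) / (z₁ ^ (n.1 + 1) * z₂ ^ (n.2 + 1))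
      = -(((m (n.1 + 1) n.2 t : ℝ) : ℂ) / (z₁ ^ (n.1 + 1) * z₂ ^ (n.2 + 1)))
        - ((m n.1 (n.2 + 1) t : ℝ) : ℂ) / (z₁ ^ (n.1 + 1) * z₂ ^ (n.2 + 1))
        + ((m 1 0 t + m 0 1 t : ℝ) : ℂ)
            * (((m n.1 n.2 t : ℝ) : ℂ) / (z₁ ^ (n.1 + 1) * z₂ ^ (n.2 + 1))) := by
    intro n; push_cast; ring
  have hsum_eq : (∑' n : ℕ × ℕ,
        ((-(m (n.1 + 1) n.2 t) - m n.1 (n.2 + 1) t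
            + m n.1 n.2 t * (m 1 0 t + m 0 1 t) : ℝ) : ℂ)
          / (z₁ ^ (n.1 + 1) * z₂ ^ (n.2 + 1)))
      = (((m 1 0 t + m 0 1 t : ℝ) : ℂ) - z₁ - z₂)
          * (∑' hk : ℕ × ℕ, ((m hk.1 hk.2 t : ℝ) : ℂ) / (z₁ ^ (hk.1 + 1) * z₂ ^ (hk.2 + 1)))
        + (∑' h : ℕ, ((m h 0 t : ℝ) : ℂ) / z₁ ^ (h + 1))
        + (∑' k : ℕ, ((m 0 k t : ℝ) : ℂ) / z₂ ^ (k + 1)) := by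
    calc (∑' n : ℕ × ℕ, ((-(m (n.1 + 1) n.2 t) - m n.1 (n.2 + 1) t
            + m n.1 n.2 t * (m 1 0 t + m 0 1 t) : ℝ) : ℂ)
          / (z₁ ^ (n.1 + 1) * z₂ ^ (n.2 + 1)))
        = ∑' n : ℕ × ℕ,
            (-(((m (n.1 + 1) n.2 t : ℝ) : ℂ) / (z₁ ^ (n.1 + 1) * z₂ ^ (n.2 + 1)))
              - ((m n.1 (n.2 + 1) t : ℝ) : ℂ) / (z₁ ^ (n.1 + 1) * z₂ ^ (n.2 + 1))
              + ((m 1 0 t + m 0 1 t : ℝ) : ℂ)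
                  * (((m n.1 n.2 t : ℝ) : ℂ) / (z₁ ^ (n.1 + 1) * z₂ ^ (n.2 + 1)))) :=
          tsum_congr hterm
      _ = (∑' n : ℕ × ℕ,
            (-(((m (n.1 + 1) n.2 t : ℝ) : ℂ) / (z₁ ^ (n.1 + 1) * z₂ ^ (n.2 + 1)))
              - ((m n.1 (n.2 + 1) t : ℝ) : ℂ) / (z₁ ^ (n.1 + 1) * z₂ ^ (n.2 + 1))))
          + ∑' n : ℕ × ℕ, ((m 1 0 t + m 0 1 t : ℝ) : ℂ)
              * (((m n.1 n.2 t : ℝ) : ℂ) / (z₁ ^ (n.1 + 1) * z₂ ^ (n.2 + 1))) :=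
          (sA1.neg.sub sA2).tsum_add (sG.mul_left _)
      _ = ((∑' n : ℕ × ℕ,
              -(((m (n.1 + 1) n.2 t : ℝ) : ℂ) / (z₁ ^ (n.1 + 1) * z₂ ^ (n.2 + 1))))
            - ∑' n : ℕ × ℕ,
              ((m n.1 (n.2 + 1) t : ℝ) : ℂ) / (z₁ ^ (n.1 + 1) * z₂ ^ (n.2 + 1)))
          + ((m 1 0 t + m 0 1 t : ℝ) : ℂ)
              * ∑' n : ℕ × ℕ,
                ((m n.1 n.2 t : ℝ) : ℂ) / (z₁ ^ (n.1 + 1) * z₂ ^ (n.2 + 1)) := by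
          rw [sA1.neg.tsum_sub sA2, tsum_mul_left]
      _ = (-(∑' n : ℕ × ℕ,
              ((m (n.1 + 1) n.2 t : ℝ) : ℂ) / (z₁ ^ (n.1 + 1) * z₂ ^ (n.2 + 1)))
            - ∑' n : ℕ × ℕ,
              ((m n.1 (n.2 + 1) t : ℝ) : ℂ) / (z₁ ^ (n.1 + 1) * z₂ ^ (n.2 + 1)))
          + ((m 1 0 t + m 0 1 t : ℝ) : ℂ)
              * ∑' n : ℕ × ℕ,
                ((m n.1 n.2 t : ℝ) : ℂ) / (z₁ ^ (n.1 + 1) * z₂ ^ (n.2 + 1)) := by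
          rw [tsum_neg]
      _ = _ := by
          rw [T1eq, T2full]; ring
  exact hsum_eq ▸ hd
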